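/- The function z(x,y) = ln(2x+y) + ln(x−y), defined where 2x+y > 0 and x−y > 0, satisfies: with u = 2x+y, v = x−y, f = g = ln, the equations d·f'''(u)/(f''(u))² − b·g'''(v)/(g''(v))² = 2(ad−bc)·1·x and −c·f'''(u)/(f''(u))² + a·g'''(v)/(g''(v))² = 2(ad−bc)·1·y hold with (a,b,c,d) = (2,1,1,−1), λ₁ = λ₂ = 1, i.e. Δ^{II} x = x and Δ^{II} y = y, and Δ^{II} z = 0. -/

import Mathlib

/-- The second-fundamental-form Laplace operator of an affine translation surface
`z = f(ax+by) + g(cx+dy)` in the isotropic 3-space, applied to a function `φ`. -/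
noncomputable def lapII (f g : ℝ → ℝ) (a b c d : ℝ) (φ : ℝ → ℝ → ℝ) (x y : ℝ) : ℝ :=
  ((iteratedDeriv 2 f (a * x + b * y) * iteratedDeriv 2 g (c * x + d * y)) ^ 2)⁻¹ /
      (2 * (a * d - b * c)) *
    ((-b * deriv (fun t => φ t y) x + a * deriv (fun t => φ x t) y) *
        (iteratedDeriv 2 f (a * x + b * y)) ^ 2 * iteratedDeriv 3 g (c * x + d * y) +
      (d * deriv (fun t => φ t y) x - c * deriv (fun t => φ x t) y) *
        iteratedDeriv 3 f (a * x + b * y) * (iteratedDeriv 2 g (c * x + d * y)) ^ 2) +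
  (iteratedDeriv 2 f (a * x + b * y) * iteratedDeriv 2 g (c * x + d * y))⁻¹ /
      (a * d - b * c) ^ 2 *
    ((2 * a * b * deriv (fun t => deriv (fun s => φ s t) x) y -
        b ^ 2 * deriv (fun t => deriv (fun s => φ s y) t) x -
        a ^ 2 * deriv (fun t => deriv (fun s => φ x s) t) y) *
        iteratedDeriv 2 f (a * x + b * y) +
      (2 * c * d * deriv (fun t => deriv (fun s => φ s t) x) y -
        d ^ 2 * deriv (fun t => deriv (fun s => φ s y) t) x -
        c ^ 2 * deriv (fun t => deriv (fun s => φ x s) t) y) *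
        iteratedDeriv 2 g (c * x + d * y))

lemma log_d2 (x : ℝ) : iteratedDeriv 2 Real.log x = -(x ^ 2)⁻¹ := by
  rw [iteratedDeriv_succ, iteratedDeriv_one, Real.deriv_log']
  simpa using (deriv_inv : deriv (fun y : ℝ => y⁻¹) x = _)

lemma log_d3 (x : ℝ) (hx : x ≠ 0) : iteratedDeriv 3 Real.log x = 2 * (x ^ 3)⁻¹ := by
  have h2 : iteratedDeriv 2 Real.log = fun y => -(y ^ 2)⁻¹ := funext log_d2
  rw [iteratedDeriv_succ, h2]
  have h : HasDerivAt (fun y : ℝ => -(y ^ 2)⁻¹) (2 * (x ^ 3)⁻¹) x := by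
    have := ((hasDerivAt_pow 2 x).inv (pow_ne_zero 2 hx)).neg
    refine this.congr_deriv ?_
    field_simp
    ring
  exact h.deriv

set_option maxHeartbeats 1000000 in
theorem stmt18 : ∀ x y : ℝ, 2 * x + y > 0 → x - y > 0 →
    ((-1 : ℝ) * (iteratedDeriv 3 Real.log (2 * x + y) /
        (iteratedDeriv 2 Real.log (2 * x + y)) ^ 2) -
      (1 : ℝ) * (iteratedDeriv 3 Real.log (x - y) /
        (iteratedDeriv 2 Real.log (x - y)) ^ 2) =
      2 * ((2 : ℝ) * (-1) - 1 * 1) * 1 * x) ∧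
    (-(1 : ℝ) * (iteratedDeriv 3 Real.log (2 * x + y) /
        (iteratedDeriv 2 Real.log (2 * x + y)) ^ 2) +
      (2 : ℝ) * (iteratedDeriv 3 Real.log (x - y) /
        (iteratedDeriv 2 Real.log (x - y)) ^ 2) =
      2 * ((2 : ℝ) * (-1) - 1 * 1) * 1 * y) ∧
    lapII Real.log Real.log 2 1 1 (-1) (fun s _ => s) x y = x ∧
    lapII Real.log Real.log 2 1 1 (-1) (fun _ t => t) x y = y ∧
    lapII Real.log Real.log 2 1 1 (-1)
      (fun s t => Real.log (2 * s + t) + Real.log (s - t)) x y = 0 := by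
  intro x y hu hv
  have hu' : 2 * x + y ≠ 0 := ne_of_gt hu
  have hv' : x - y ≠ 0 := ne_of_gt hv
  -- basic derivative facts
  have hlog : ∀ x' t : ℝ, 2 * x' + t ≠ 0 → x' - t ≠ 0 →
      HasDerivAt (fun s => Real.log (2 * s + t) + Real.log (s - t))
        (2 * (2 * x' + t)⁻¹ + (x' - t)⁻¹) x' := by
    intro x' t h1 h2
    have a1 : HasDerivAt (fun s : ℝ => 2 * s + t) 2 x' := by
      simpa using ((hasDerivAt_id x').const_mul 2).add_const t
    have a2 : HasDerivAt (fun s : ℝ => s - t) 1 x' := by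
      simpa using (hasDerivAt_id x').sub_const t
    have := (a1.log h1).add (a2.log h2)
    exact this.congr_deriv (by simp [div_eq_mul_inv])
  have hlogy : ∀ y' : ℝ, 2 * x + y' ≠ 0 → x - y' ≠ 0 →
      HasDerivAt (fun t => Real.log (2 * x + t) + Real.log (x - t))
        ((2 * x + y')⁻¹ - (x - y')⁻¹) y' := by
    intro y' h1 h2
    have a1 : HasDerivAt (fun t : ℝ => 2 * x + t) 1 y' := by
      simpa using (hasDerivAt_id y').const_add (2 * x)
    have a2 : HasDerivAt (fun t : ℝ => x - t) (-1) y' := by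
      simpa using (hasDerivAt_id y').const_sub x
    have := (a1.log h1).add (a2.log h2)
    have e : (1 : ℝ) / (2 * x + y') + -1 / (x - y') = (2 * x + y')⁻¹ - (x - y')⁻¹ := by
      field_simp
      all_goals ring
    rw [e] at this; exact this
  -- first partials of z = log(2x+y) + log(x-y)
  have hzx : deriv (fun t => Real.log (2 * t + y) + Real.log (t - y)) x
      = 2 * (2 * x + y)⁻¹ + (x - y)⁻¹ := (hlog x y hu' hv').deriv
  have hzy : deriv (fun t => Real.log (2 * x + t) + Real.log (x - t)) y
      = (2 * x + y)⁻¹ - (x - y)⁻¹ := (hlogy y hu' hv').deriv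
  -- mixed partial z_xy
  have hzxy : deriv (fun t => deriv (fun s => Real.log (2 * s + t) + Real.log (s - t)) x) y
      = -2 * ((2 * x + y) ^ 2)⁻¹ + ((x - y) ^ 2)⁻¹ := by
    have ho : IsOpen {t : ℝ | 0 < 2 * x + t ∧ 0 < x - t} :=
      IsOpen.and (isOpen_lt continuous_const (by fun_prop))
        (isOpen_lt continuous_const (by fun_prop))
    have hev : (fun t => deriv (fun s => Real.log (2 * s + t) + Real.log (s - t)) x)
        =ᶠ[nhds y] fun t => 2 * (2 * x + t)⁻¹ + (x - t)⁻¹ := by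
      filter_upwards [ho.mem_nhds ⟨hu, hv⟩] with t ht
      exact (hlog x t (ne_of_gt ht.1) (ne_of_gt ht.2)).deriv
    rw [hev.deriv_eq]
    have a1 : HasDerivAt (fun t : ℝ => 2 * x + t) 1 y := by
      simpa using (hasDerivAt_id y).const_add (2 * x)
    have a2 : HasDerivAt (fun t : ℝ => x - t) (-1) y := by
      simpa using (hasDerivAt_id y).const_sub x
    have h := ((a1.inv hu').const_mul 2).add (a2.inv hv')
    have e : 2 * (-1 / (2 * x + y) ^ 2) + - -1 / (x - y) ^ 2
        = -2 * ((2 * x + y) ^ 2)⁻¹ + ((x - y) ^ 2)⁻¹ := by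
      field_simp
      all_goals ring
    rw [e] at h; exact h.deriv
  -- z_xx
  have hzxx : deriv (fun t => deriv (fun s => Real.log (2 * s + y) + Real.log (s - y)) t) x
      = -4 * ((2 * x + y) ^ 2)⁻¹ - ((x - y) ^ 2)⁻¹ := by
    have ho : IsOpen {t : ℝ | 0 < 2 * t + y ∧ 0 < t - y} :=
      IsOpen.and (isOpen_lt continuous_const (by fun_prop))
        (isOpen_lt continuous_const (by fun_prop))
    have hev : (fun t => deriv (fun s => Real.log (2 * s + y) + Real.log (s - y)) t)
        =ᶠ[nhds x] fun t => 2 * (2 * t + y)⁻¹ + (t - y)⁻¹ := by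
      filter_upwards [ho.mem_nhds ⟨hu, hv⟩] with t ht
      exact (hlog t y (ne_of_gt ht.1) (ne_of_gt ht.2)).deriv
    rw [hev.deriv_eq]
    have a1 : HasDerivAt (fun t : ℝ => 2 * t + y) 2 x := by
      simpa using ((hasDerivAt_id x).const_mul 2).add_const y
    have a2 : HasDerivAt (fun t : ℝ => t - y) 1 x := by
      simpa using (hasDerivAt_id x).sub_const y
    have h := ((a1.inv hu').const_mul 2).add (a2.inv hv')
    have e : 2 * (-2 / (2 * x + y) ^ 2) + -1 / (x - y) ^ 2
        = -4 * ((2 * x + y) ^ 2)⁻¹ - ((x - y) ^ 2)⁻¹ := by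
      field_simp
      all_goals ring
    rw [e] at h; exact h.deriv
  -- z_yy
  have hzyy : deriv (fun t => deriv (fun s => Real.log (2 * x + s) + Real.log (x - s)) t) y
      = -((2 * x + y) ^ 2)⁻¹ - ((x - y) ^ 2)⁻¹ := by
    have ho : IsOpen {t : ℝ | 0 < 2 * x + t ∧ 0 < x - t} :=
      IsOpen.and (isOpen_lt continuous_const (by fun_prop))
        (isOpen_lt continuous_const (by fun_prop))
    have hev : (fun t => deriv (fun s => Real.log (2 * x + s) + Real.log (x - s)) t)
        =ᶠ[nhds y] fun t => (2 * x + t)⁻¹ - (x - t)⁻¹ := by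
      filter_upwards [ho.mem_nhds ⟨hu, hv⟩] with t ht
      exact (hlogy t (ne_of_gt ht.1) (ne_of_gt ht.2)).deriv
    rw [hev.deriv_eq]
    have a1 : HasDerivAt (fun t : ℝ => 2 * x + t) 1 y := by
      simpa using (hasDerivAt_id y).const_add (2 * x)
    have a2 : HasDerivAt (fun t : ℝ => x - t) (-1) y := by
      simpa using (hasDerivAt_id y).const_sub x
    have h := (a1.inv hu').sub (a2.inv hv')
    have e : -1 / (2 * x + y) ^ 2 - - -1 / (x - y) ^ 2
        = -((2 * x + y) ^ 2)⁻¹ - ((x - y) ^ 2)⁻¹ := by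
      field_simp
      all_goals ring
    rw [e] at h; exact h.deriv
  refine ⟨?_, ?_, ?_, ?_, ?_⟩
  · rw [log_d2, log_d2, log_d3 _ hu', log_d3 _ hv']
    field_simp
    ring
  · rw [log_d2, log_d2, log_d3 _ hu', log_d3 _ hv']
    field_simp
    ring
  · simp only [lapII, deriv_id'', deriv_const', deriv_const, one_mul, neg_one_mul, ← sub_eq_add_neg]
    rw [log_d2, log_d2, log_d3 _ hu', log_d3 _ hv']
    field_simp
    ring
  · simp only [lapII, deriv_id'', deriv_const', deriv_const, one_mul, neg_one_mul, ← sub_eq_add_neg]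
    rw [log_d2, log_d2, log_d3 _ hu', log_d3 _ hv']
    field_simp
    ring
  · simp only [lapII, one_mul, neg_one_mul, ← sub_eq_add_neg]
    rw [hzx, hzy, hzxy, hzxx, hzyy, log_d2, log_d2, log_d3 _ hu', log_d3 _ hv']
    field_simp
    ring
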